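/- Let X = {(u,v,w) ∈ ℝ³ : u ≤ 0, v ≤ 0, w ≤ 0, uv + w - 1 ≤ 0} with coordinatewise order. For x₀ = (u₀,v₀,w₀) ∈ X and x_α = (u_α,v_α,w₀) ∈ X with u_α < u₀ ≤ 0, the Hausdorff distance between the principal ideals x_α↓ and x₀↓ (as subsets of ℝ³ with Euclidean metric) is infinite (equivalently, for every M > 0 there exists z ∈ x₀↓ with dist(z, x_α↓) > M). -/

import Mathlib

def X16 : Set (EuclideanSpace ℝ (Fin 3)) :=
  {p | p 0 ≤ 0 ∧ p 1 ≤ 0 ∧ p 2 ≤ 0 ∧ p 0 * p 1 + p 2 - 1 ≤ 0}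

def le16 (x y : EuclideanSpace ℝ (Fin 3)) : Prop := ∀ i : Fin 3, x i ≤ y i

def down16 (x : EuclideanSpace ℝ (Fin 3)) : Set (EuclideanSpace ℝ (Fin 3)) :=
  {z | z ∈ X16 ∧ le16 z x}

lemma coord_le_dist (a b : EuclideanSpace ℝ (Fin 3)) (i : Fin 3) :
    |a i - b i| ≤ dist a b := by
  rw [EuclideanSpace.dist_eq]
  have hsum : |a i - b i| ^ 2 ≤ ∑ j : Fin 3, dist (a j) (b j) ^ 2 := by
    have : |a i - b i| ^ 2 = dist (a i) (b i) ^ 2 := by rw [Real.dist_eq]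
    rw [this]
    exact Finset.single_le_sum (f := fun j => dist (a j) (b j) ^ 2)
      (fun j _ => sq_nonneg _) (Finset.mem_univ i)
  calc |a i - b i| = Real.sqrt (|a i - b i| ^ 2) := by
        rw [Real.sqrt_sq (abs_nonneg _)]
    _ ≤ _ := Real.sqrt_le_sqrt hsum

theorem stmt_16 (u₀ v₀ w₀ uα vα : ℝ)
    (x₀ xα : EuclideanSpace ℝ (Fin 3))
    (hx₀ : x₀ = ![u₀, v₀, w₀]) (hxα : xα = ![uα, vα, w₀])
    (hx₀X : x₀ ∈ X16) (hxαX : xα ∈ X16)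
    (hu : uα < u₀) (hu0 : u₀ ≤ 0) :
    ∀ M : ℝ, 0 < M → ∃ z ∈ down16 x₀, M < Metric.infDist z (down16 xα) := by
  intro M hM
  have hα : uα < 0 := lt_of_lt_of_le hu hu0
  have hd : uα - u₀ < 0 := by linarith
  -- unpack x₀ ∈ X16
  unfold X16 at hx₀X; rw [Set.mem_setOf_eq, hx₀] at hx₀X
  obtain ⟨h1, h2, h3, h4⟩ := hx₀X
  simp only [Matrix.cons_val_zero, Matrix.cons_val_one, Matrix.head_cons,
    Matrix.cons_val_two, Matrix.tail_cons] at h1 h2 h3 h4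
  set N : ℝ := M + 1 with hN
  have hN0 : 0 < N := by positivity
  set A : ℝ := (N + 1 - w₀ - uα * N) / uα - 1 with hA
  set B : ℝ := (N - uα * N) / (uα - u₀) - 1 with hB
  set t : ℝ := min (min v₀ (-(N + 1))) (min A B) with htdef
  have ht1 : t ≤ v₀ := le_trans (min_le_left _ _) (min_le_left _ _)
  have ht2 : t ≤ -(N + 1) := le_trans (min_le_left _ _) (min_le_right _ _)
  have htA : t ≤ A := le_trans (min_le_right _ _) (min_le_left _ _)
  have htB : t ≤ B := le_trans (min_le_right _ _) (min_le_right _ _)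
  have ht3 : N + 1 - w₀ - uα * N < uα * t := by
    have h5 : uα * A ≤ uα * t := mul_le_mul_of_nonpos_left htA (le_of_lt hα)
    have h6 : uα * A = (N + 1 - w₀ - uα * N) - uα := by
      rw [hA, mul_sub, mul_div_cancel₀ _ (ne_of_lt hα)]; ring
    linarith
  have ht4 : N - uα * N < (uα - u₀) * t := by
    have h5 : (uα - u₀) * B ≤ (uα - u₀) * t := mul_le_mul_of_nonpos_left htB (le_of_lt hd)
    have h6 : (uα - u₀) * B = (N - uα * N) - (uα - u₀) := by
      rw [hB, mul_sub, mul_div_cancel₀ _ (ne_of_lt hd)]; ring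
    linarith
  clear_value A B
  set m : ℝ := min w₀ (1 - u₀ * t) with hm
  set z : EuclideanSpace ℝ (Fin 3) := WithLp.toLp 2 ![u₀, t, m] with hz
  have hz0 : z 0 = u₀ := rfl
  have hz1 : z 1 = t := rfl
  have hz2 : z 2 = m := rfl
  have hmw : m ≤ w₀ := min_le_left _ _
  have hzX : z ∈ down16 x₀ := by
    constructor
    · refine ⟨hu0, ?_, ?_, ?_⟩
      · show t ≤ 0; linarith
      · show m ≤ 0; linarith
      · show u₀ * t + m - 1 ≤ 0
        have : m ≤ 1 - u₀ * t := min_le_right _ _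
        linarith
    · intro i
      fin_cases i
      · show u₀ ≤ x₀ 0; rw [hx₀]; exact le_refl _
      · show t ≤ x₀ 1; rw [hx₀]; exact ht1
      · show m ≤ x₀ 2; rw [hx₀]; exact hmw
  refine ⟨z, hzX, ?_⟩
  have hne : (down16 xα).Nonempty := ⟨xα, hxαX, fun i => le_refl _⟩
  have key : ∀ y ∈ down16 xα, N ≤ dist z y := by
    intro y hy
    obtain ⟨⟨hy0n, hy1n, hy2n, hy4⟩, hyle⟩ := hy
    have hy0 : y 0 ≤ uα := by
      have := hyle 0; rw [hxα] at this; simpa using this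
    by_cases hc : N ≤ |z 1 - y 1|
    · exact le_trans hc (coord_le_dist z y 1)
    · push_neg at hc
      rw [hz1, abs_sub_lt_iff] at hc
      have hy1t : y 1 ≤ t + N := by linarith [hc.1, hc.2]
      have hy1neg : y 1 ≤ 0 := hy1n
      -- y 0 * y 1 ≥ uα * (t + N)
      have hp1 : uα * (y 1) ≤ y 0 * y 1 := mul_le_mul_of_nonpos_right hy0 hy1neg
      have hp2 : uα * (t + N) ≤ uα * (y 1) := mul_le_mul_of_nonpos_left hy1t (le_of_lt hα)
      have hy2 : y 2 ≤ 1 - uα * (t + N) := by linarith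
      have hgap : N ≤ z 2 - y 2 := by
        rw [hz2, hm]
        rcases min_cases w₀ (1 - u₀ * t) with ⟨he, _⟩ | ⟨he, _⟩ <;> rw [he] <;> linarith
      have : N ≤ |z 2 - y 2| := le_trans hgap (le_abs_self _)
      exact le_trans this (coord_le_dist z y 2)
  have hnlt : ¬ Metric.infDist z (down16 xα) < N := by
    rw [Metric.infDist_lt_iff hne]
    rintro ⟨y, hy, hdy⟩
    exact absurd hdy (not_lt.2 (key y hy))
  push_neg at hnlt
  linarith
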